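/- ('Prepare to puncture' estimate) Let ω be a positive locally finite Borel measure on ℝⁿ, let K be a dyadic cube, let p ∈ ℝⁿ, and set ω̃ := ω − ω({p}) δ_p. Then ‖Δ_K^ω x‖²_{L²(ω)} ≤ n · ℓ(K)² · ω̃(K), where x denotes the identity map of ℝⁿ. Consequently, for any at most countable set 𝔓 ⊆ ℝⁿ whose atoms in K have ω-masses attaining their supremum, ‖Δ_K^ω x‖²_{L²(ω)} ≤ n · ℓ(K)² · ω(K, 𝔓), where ω(K, 𝔓) := ω(K) − sup{ω({q}) : q ∈ K ∩ 𝔓} (the sup of the empty set being 0). -/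

import Mathlib

open MeasureTheory
open scoped ENNReal NNReal

noncomputable section

/-- An axis-parallel half-open cube in `ℝⁿ`, given by its corner `a` and side length `l`. -/
structure QCube (n : ℕ) where
  a : Fin n → ℝ
  l : ℝ

/-- The half-open cube as a subset of `ℝⁿ`. -/
def QCube.pts {n : ℕ} (Q : QCube n) : Set (EuclideanSpace ℝ (Fin n)) :=
  {x | ∀ i, Q.a i ≤ x i ∧ x i < Q.a i + Q.l}

/-- The dyadic child of a cube indexed by `e ∈ {0,1}ⁿ`. -/
def QCube.child {n : ℕ} (Q : QCube n) (e : Fin n → Bool) : QCube n :=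
  ⟨fun i => Q.a i + (if e i then Q.l / 2 else 0), Q.l / 2⟩

/-- The dyadic grid on `ℝⁿ` obtained by translating the standard grid by `t`. -/
def dyadicGrid {n : ℕ} (t : Fin n → ℝ) : Set (QCube n) :=
  {Q | ∃ (k : ℤ) (m : Fin n → ℤ),
    Q = ⟨fun i => t i + (2:ℝ) ^ (-k) * (m i : ℝ), (2:ℝ) ^ (-k)⟩}

/-- `E_S^μ f`, the `μ`-average of `f` over `S` (junk value `0` when `μ(S)` is `0` or `∞`). -/
def muAvg {n : ℕ} (μ : Measure (EuclideanSpace ℝ (Fin n)))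
    (S : Set (EuclideanSpace ℝ (Fin n))) (f : EuclideanSpace ℝ (Fin n) → ℝ) : ℝ :=
  (μ S).toReal⁻¹ * ∫ x in S, f x ∂μ

/-- The martingale difference `Δ_I^μ f = Σ_{I' child of I} 1_{I'} E_{I'}^μ f − 1_I E_I^μ f`. -/
def mdiff {n : ℕ} (μ : Measure (EuclideanSpace ℝ (Fin n))) (I : QCube n)
    (f : EuclideanSpace ℝ (Fin n) → ℝ) (x : EuclideanSpace ℝ (Fin n)) : ℝ :=
  (∑ e : Fin n → Bool,
      Set.indicator (I.child e).pts (fun _ => muAvg μ (I.child e).pts f) x)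
    - Set.indicator I.pts (fun _ => muAvg μ I.pts f) x

/-- `‖Δ_I^μ x‖²_{L²(μ)} = Σᵢ ∫ (Δ_I^μ xᵢ)² dμ`, for the identity map `x` of `ℝⁿ`. -/
def energyTerm {n : ℕ} (μ : Measure (EuclideanSpace ℝ (Fin n))) (I : QCube n) : ℝ≥0∞ :=
  ∑ i : Fin n, ∫⁻ x, ENNReal.ofReal ((mdiff μ I (fun z => z i) x) ^ 2) ∂μ

namespace st18
variable {n : ℕ}

lemma pts_meas (Q : QCube n) : MeasurableSet Q.pts := by
  have : Q.pts = ⋂ i, (fun x : EuclideanSpace ℝ (Fin n) => x i) ⁻¹' Set.Ico (Q.a i) (Q.a i + Q.l) := by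
    ext x; simp [QCube.pts, Set.mem_Ico]
  rw [this]
  exact MeasurableSet.iInter fun i => ((measurable_pi_apply i).comp (WithLp.measurable_ofLp _ _)) measurableSet_Ico

lemma pts_bounded (Q : QCube n) : Bornology.IsBounded Q.pts := by
  rw [Metric.isBounded_iff]
  refine ⟨Real.sqrt (∑ _i : Fin n, Q.l ^ 2), fun x hx y hy => ?_⟩
  rw [EuclideanSpace.dist_eq]
  apply Real.sqrt_le_sqrt
  apply Finset.sum_le_sum
  intro i _
  have h1 := hx i; have h2 := hy i
  have : |x i - y i| ≤ |Q.l| := by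
    rw [abs_le]
    constructor <;> [nlinarith [abs_nonneg Q.l, le_abs_self Q.l]; nlinarith [le_abs_self Q.l]]
  calc dist (x i) (y i) ^ 2 = |x i - y i| ^ 2 := by rw [Real.dist_eq]
    _ ≤ |Q.l| ^ 2 := by nlinarith [abs_nonneg (x i - y i)]
    _ = Q.l ^ 2 := sq_abs _

def chIdx (Q : QCube n) (x : EuclideanSpace ℝ (Fin n)) : Fin n → Bool :=
  fun i => decide (Q.a i + Q.l / 2 ≤ x i)

lemma child_subset (Q : QCube n) (hl : 0 < Q.l) (e : Fin n → Bool) :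
    (Q.child e).pts ⊆ Q.pts := by
  intro x hx i
  have h := hx i
  simp only [QCube.child] at h
  rcases h with ⟨h1, h2⟩
  by_cases he : e i <;> simp [he] at h1 h2 <;> constructor <;> linarith

lemma mem_child_self {Q : QCube n} {x : EuclideanSpace ℝ (Fin n)} (hx : x ∈ Q.pts) :
    x ∈ (Q.child (chIdx Q x)).pts := by
  intro i
  have h := hx i
  simp only [QCube.child, chIdx]
  by_cases hc : Q.a i + Q.l / 2 ≤ x i
  · simp only [decide_eq_true hc, ↓reduceIte]
    exact ⟨by linarith, by linarith⟩
  · push_neg at hc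
    simp only [not_le.2 hc, decide_false, Bool.false_eq_true, ↓reduceIte]
    exact ⟨by linarith, by linarith⟩

lemma child_eq {Q : QCube n} {x : EuclideanSpace ℝ (Fin n)} {e : Fin n → Bool}
    (hx : x ∈ (Q.child e).pts) : e = chIdx Q x := by
  funext i
  have h := hx i
  simp only [QCube.child] at h
  rcases h with ⟨h1, h2⟩
  by_cases he : e i <;> simp [he] at h1 h2 ⊢ <;> simp [chIdx] <;> linarith


variable {ω : Measure (EuclideanSpace ℝ (Fin n))}

lemma mdiff_eq {Q : QCube n} {x : EuclideanSpace ℝ (Fin n)}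
    (hx : x ∈ Q.pts) (f : EuclideanSpace ℝ (Fin n) → ℝ) :
    mdiff ω Q f x = muAvg ω (Q.child (chIdx Q x)).pts f - muAvg ω Q.pts f := by
  unfold mdiff
  rw [Set.indicator_of_mem hx]
  congr 1
  rw [Finset.sum_eq_single (chIdx Q x)]
  · exact Set.indicator_of_mem (mem_child_self hx) _
  · intro e _ he
    exact Set.indicator_of_notMem (fun hm => he (child_eq hm)) _
  · intro h; exact absurd (Finset.mem_univ _) h

lemma mdiff_off {Q : QCube n} (hl : 0 < Q.l) {x : EuclideanSpace ℝ (Fin n)}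
    (hx : x ∉ Q.pts) (f : EuclideanSpace ℝ (Fin n) → ℝ) :
    mdiff ω Q f x = 0 := by
  unfold mdiff
  rw [Set.indicator_of_notMem hx]
  simp only [sub_zero]
  apply Finset.sum_eq_zero
  intro e _
  exact Set.indicator_of_notMem (fun hm => hx (child_subset Q hl e hm)) _

lemma coord_intOn {Q : QCube n} {S : Set (EuclideanSpace ℝ (Fin n))}
    (hS : MeasurableSet S) (hsub : S ⊆ Q.pts) (hfin : ω S ≠ ⊤) (i : Fin n) :
    IntegrableOn (fun z : EuclideanSpace ℝ (Fin n) => z i) S ω := by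
  apply Measure.integrableOn_of_bounded hfin
    ((show Measurable (fun z : EuclideanSpace ℝ (Fin n) => z i) from
      (measurable_pi_apply i).comp (WithLp.measurable_ofLp _ _)).aestronglyMeasurable) (M := |Q.a i| + |Q.l|)
  rw [ae_restrict_iff' hS]
  refine Filter.Eventually.of_forall fun x hx => ?_
  have h := hsub hx i
  rw [Real.norm_eq_abs, abs_le]
  constructor
  · nlinarith [neg_abs_le (Q.a i), abs_nonneg Q.l]
  · nlinarith [le_abs_self (Q.a i), le_abs_self Q.l]

lemma avg_mem {Q : QCube n} {S : Set (EuclideanSpace ℝ (Fin n))}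
    (hS : MeasurableSet S) (hsub : S ⊆ Q.pts) (h0 : ω S ≠ 0) (hfin : ω S ≠ ⊤) (i : Fin n) :
    muAvg ω S (fun z => z i) ∈ Set.Icc (Q.a i) (Q.a i + Q.l) := by
  have hm : 0 < (ω S).toReal := ENNReal.toReal_pos h0 hfin
  have hint := coord_intOn hS hsub hfin (ω := ω) i
  have hlow : Q.a i * (ω S).toReal ≤ ∫ x in S, x i ∂ω := by
    have := setIntegral_mono_on (integrableOn_const hfin) hint hS
      (fun x hx => (hsub hx i).1)
    rwa [setIntegral_const, measureReal_def, smul_eq_mul, mul_comm] at this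
  have hhigh : ∫ x in S, x i ∂ω ≤ (Q.a i + Q.l) * (ω S).toReal := by
    have := setIntegral_mono_on hint (integrableOn_const hfin) hS
      (fun x hx => (hsub hx i).2.le)
    rwa [setIntegral_const, measureReal_def, smul_eq_mul, mul_comm] at this
  unfold muAvg
  constructor
  · rw [le_inv_mul_iff₀ hm]; linarith
  · rw [inv_mul_le_iff₀ hm]; linarith

lemma children_disjoint (Q : QCube n) :
    Pairwise (Function.onFun Disjoint (fun e => (Q.child e).pts)) := by
  intro e e' hee
  simp only [Function.onFun]
  rw [Set.disjoint_left]
  intro x hx hx'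
  exact hee ((child_eq hx).trans (child_eq hx').symm)

lemma union_children (Q : QCube n) (hl : 0 < Q.l) :
    (⋃ e, (Q.child e).pts) = Q.pts := by
  apply Set.Subset.antisymm
  · exact Set.iUnion_subset fun e => child_subset Q hl e
  · intro x hx
    exact Set.mem_iUnion.2 ⟨chIdx Q x, mem_child_self hx⟩

lemma integral_mdiff_zero {Q : QCube n} (hl : 0 < Q.l) (h0 : ω Q.pts ≠ 0)
    (hfin : ω Q.pts ≠ ⊤) (i : Fin n) :
    ∫ x, mdiff ω Q (fun z => z i) x ∂ω = 0 := by
  have hfe : ∀ e, ω (Q.child e).pts ≠ ⊤ :=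
    fun e => ne_top_of_le_ne_top hfin (measure_mono (child_subset Q hl e))
  have hint_e : ∀ e : Fin n → Bool, Integrable
      (Set.indicator (Q.child e).pts (fun _ => muAvg ω (Q.child e).pts (fun z => z i))) ω := by
    intro e
    rw [integrable_indicator_iff (pts_meas _)]
    exact integrableOn_const (hfe e)
  have hintK : Integrable
      (Set.indicator Q.pts (fun _ => muAvg ω Q.pts (fun z => z i))) ω := by
    rw [integrable_indicator_iff (pts_meas _)]
    exact integrableOn_const hfin
  have : (fun x => mdiff ω Q (fun z => z i) x) = fun x =>
      (∑ e : Fin n → Bool,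
        Set.indicator (Q.child e).pts (fun _ => muAvg ω (Q.child e).pts (fun z => z i)) x)
      - Set.indicator Q.pts (fun _ => muAvg ω Q.pts (fun z => z i)) x := rfl
  rw [this, integral_sub (integrable_finset_sum _ (fun e _ => hint_e e)) hintK,
    integral_finset_sum _ (fun e _ => hint_e e)]
  have havg : ∀ (S : Set (EuclideanSpace ℝ (Fin n))), MeasurableSet S → ω S ≠ ⊤ →
      ∫ x, Set.indicator S (fun _ => muAvg ω S (fun z => z i)) x ∂ω
        = ∫ x in S, x i ∂ω := by
    intro S hS hSfin
    rw [integral_indicator_const _ hS]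
    by_cases hz : ω S = 0
    · have : ω.restrict S = 0 := Measure.restrict_eq_zero.2 hz
      rw [this, integral_zero_measure, measureReal_def, hz]
      simp
    · have hm : (ω S).toReal ≠ 0 := ENNReal.toReal_ne_zero.2 ⟨hz, hSfin⟩
      unfold muAvg
      rw [smul_eq_mul, measureReal_def, ← mul_assoc, mul_inv_cancel₀ hm, one_mul]
  rw [havg Q.pts (pts_meas _) hfin]
  have : ∀ e ∈ (Finset.univ : Finset (Fin n → Bool)),
      ∫ x, Set.indicator (Q.child e).pts (fun _ => muAvg ω (Q.child e).pts (fun z => z i)) x ∂ω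
        = ∫ x in (Q.child e).pts, x i ∂ω :=
    fun e _ => havg _ (pts_meas _) (hfe e)
  rw [Finset.sum_congr rfl this, ← integral_iUnion_fintype (fun e => pts_meas _)
    (children_disjoint Q) (fun e => coord_intOn (pts_meas _) (child_subset Q hl e) (hfe e) i),
    union_children Q hl, sub_self]

lemma mdiff_measurable {Q : QCube n} (f : EuclideanSpace ℝ (Fin n) → ℝ) :
    Measurable (mdiff ω Q f) := by
  unfold mdiff
  exact (Finset.measurable_sum _ fun e _ =>
    (measurable_const.indicator (pts_meas _))).sub
    (measurable_const.indicator (pts_meas _))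

lemma mdiff_bound {Q : QCube n} (f : EuclideanSpace ℝ (Fin n) → ℝ) (x) :
    |mdiff ω Q f x| ≤ (∑ e : Fin n → Bool, |muAvg ω (Q.child e).pts f|)
      + |muAvg ω Q.pts f| := by
  unfold mdiff
  refine (abs_sub _ _).trans (add_le_add ?_ ?_)
  · refine (Finset.abs_sum_le_sum_abs _ _).trans (Finset.sum_le_sum fun e _ => ?_)
    simpa [Real.norm_eq_abs] using
      norm_indicator_le_norm_self (fun _ => muAvg ω (Q.child e).pts f) x
  · simpa [Real.norm_eq_abs] using
      norm_indicator_le_norm_self (fun _ => muAvg ω Q.pts f) x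

lemma key {Q : QCube n} (hl : 0 < Q.l) (hfin : ω Q.pts ≠ ⊤)
    (p : EuclideanSpace ℝ (Fin n)) (i : Fin n) :
    ∫⁻ x, ENNReal.ofReal ((mdiff ω Q (fun z => z i) x) ^ 2) ∂ω
      ≤ ENNReal.ofReal (Q.l ^ 2) * ω (Q.pts \ {p}) := by
  set g := mdiff ω Q (fun z => z i) with hg
  by_cases h0 : ω Q.pts = 0
  · have hae : (fun x => ENNReal.ofReal (g x ^ 2)) =ᵐ[ω] 0 := by
      rw [Filter.EventuallyEq, ae_iff]
      apply measure_mono_null _ h0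
      intro x hx
      simp only [Set.mem_setOf_eq, Pi.zero_apply] at hx
      by_contra hxK
      exact hx (by rw [hg, mdiff_off hl hxK]; simp)
    rw [lintegral_congr_ae hae]
    simp
  set M := (∑ e : Fin n → Bool, |muAvg ω (Q.child e).pts (fun z => z i)|)
      + |muAvg ω Q.pts (fun z => z i)| with hM
  have hgb : ∀ x, |g x| ≤ M := fun x => mdiff_bound _ x
  have hgm : Measurable g := mdiff_measurable _
  have hIsq : ∀ (d : ℝ) (s : Set (EuclideanSpace ℝ (Fin n))), MeasurableSet s → ω s ≠ ⊤ →
      IntegrableOn (fun x => (g x - d) ^ 2) s ω := by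
    intro d s hs hsfin
    apply Measure.integrableOn_of_bounded hsfin
      (((hgm.sub measurable_const).pow_const 2).aestronglyMeasurable) (M := (M + |d|) ^ 2)
    refine Filter.Eventually.of_forall fun x => ?_
    have h1 := hgb x
    rw [Real.norm_eq_abs, abs_of_nonneg (sq_nonneg _)]
    have h2 : |g x - d| ≤ M + |d| := (abs_sub (g x) d).trans (by linarith)
    calc (g x - d) ^ 2 = |g x - d| ^ 2 := (sq_abs _).symm
      _ ≤ (M + |d|) ^ 2 := pow_le_pow_left₀ (abs_nonneg _) h2 2
  have hIsq' : ∀ (s : Set (EuclideanSpace ℝ (Fin n))), MeasurableSet s → ω s ≠ ⊤ →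
      IntegrableOn (fun x => g x ^ 2) s ω := by
    intro s hs hsfin
    simpa using hIsq 0 s hs hsfin
  have hDm : MeasurableSet (Q.pts \ {p}) := (pts_meas Q).diff (measurableSet_singleton p)
  have hDfin : ω (Q.pts \ {p}) ≠ ⊤ := ne_top_of_le_ne_top hfin (measure_mono Set.diff_subset)
  set c : ℝ := if ω {p} = 0 then 0 else g p with hc
  have hcIcc : c = 0 ∨ ∃ v ∈ Set.Icc (Q.a i) (Q.a i + Q.l),
      c = v - muAvg ω Q.pts (fun z => z i) := by
    by_cases hp0 : ω {p} = 0
    · left; simp [hc, hp0]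
    · by_cases hpK : p ∈ Q.pts
      · right
        have hpS : p ∈ (Q.child (chIdx Q p)).pts := mem_child_self hpK
        have hS0 : ω (Q.child (chIdx Q p)).pts ≠ 0 :=
          fun h => hp0 (measure_mono_null (Set.singleton_subset_iff.2 hpS) h)
        have hSfin := ne_top_of_le_ne_top hfin (measure_mono (child_subset Q hl (chIdx Q p)))
        refine ⟨_, avg_mem (pts_meas _) (child_subset Q hl _) hS0 hSfin i, ?_⟩
        rw [hc, if_neg hp0, hg, mdiff_eq hpK]
      · left; rw [hc, if_neg hp0, hg, mdiff_off hl hpK]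
  have hbound : ∀ᵐ x ∂ω, x ∈ Q.pts → (g x - c) ^ 2 ≤ Q.l ^ 2 := by
    have hN : ∀ᵐ x ∂ω, ∀ e : Fin n → Bool,
        ω (Q.child e).pts = 0 → x ∉ (Q.child e).pts := by
      rw [ae_all_iff]
      intro e
      by_cases hz : ω (Q.child e).pts = 0
      · rw [ae_iff]
        apply measure_mono_null _ hz
        intro x hx
        simp only [Set.mem_setOf_eq] at hx
        push_neg at hx
        exact hx.2
      · exact Filter.Eventually.of_forall fun x h => absurd h hz
    filter_upwards [hN] with x hx hxK
    have hxS : x ∈ (Q.child (chIdx Q x)).pts := mem_child_self hxK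
    have hS0 : ω (Q.child (chIdx Q x)).pts ≠ 0 := fun h => (hx _ h) hxS
    have hSfin := ne_top_of_le_ne_top hfin (measure_mono (child_subset Q hl (chIdx Q x)))
    obtain ⟨a1, b1⟩ := avg_mem (pts_meas (Q.child (chIdx Q x))) (child_subset Q hl _) hS0 hSfin i
    obtain ⟨a2, b2⟩ := avg_mem (pts_meas Q) (Set.Subset.refl _) h0 hfin i
    have hgx : g x = muAvg ω (Q.child (chIdx Q x)).pts (fun z => z i)
        - muAvg ω Q.pts (fun z => z i) := mdiff_eq hxK _
    rcases hcIcc with hc0 | ⟨v, hv, hveq⟩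
    · rw [hc0, sub_zero, hgx]
      nlinarith
    · obtain ⟨a3, b3⟩ := hv
      rw [hveq, hgx]
      nlinarith
  have hgsq_eq : ∀ x, g x ^ 2 = Set.indicator Q.pts (fun x => g x ^ 2) x := by
    intro x
    by_cases hxK : x ∈ Q.pts
    · rw [Set.indicator_of_mem hxK]
    · rw [Set.indicator_of_notMem hxK, hg, mdiff_off hl hxK]
      simp
  have hint2 : Integrable (fun x => g x ^ 2) ω := by
    rw [show (fun x => g x ^ 2) = Set.indicator Q.pts (fun x => g x ^ 2) from funext hgsq_eq,
      integrable_indicator_iff (pts_meas Q)]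
    exact hIsq' Q.pts (pts_meas Q) hfin
  rw [← ofReal_integral_eq_lintegral_ofReal hint2
    (Filter.Eventually.of_forall fun x => sq_nonneg _)]
  have hgK0 : ∫ x in Q.pts, g x ∂ω = 0 := by
    have h1 : ∫ x in Q.pts, g x ∂ω = ∫ x, g x ∂ω := by
      rw [← integral_indicator (pts_meas Q)]
      apply integral_congr_ae
      refine Filter.Eventually.of_forall fun x => ?_
      by_cases hxK : x ∈ Q.pts
      · rw [Set.indicator_of_mem hxK]
      · rw [Set.indicator_of_notMem hxK, hg, mdiff_off hl hxK]
    rw [h1, hg]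
    exact integral_mdiff_zero hl h0 hfin i
  have hgint : IntegrableOn g Q.pts ω := by
    apply Measure.integrableOn_of_bounded hfin hgm.aestronglyMeasurable (M := M)
    exact Filter.Eventually.of_forall fun x => by rw [Real.norm_eq_abs]; exact hgb x
  have hexp : ∫ x in Q.pts, (g x - c) ^ 2 ∂ω
      = ∫ x in Q.pts, g x ^ 2 ∂ω + c ^ 2 * (ω Q.pts).toReal := by
    have hfun : (fun x => (g x - c) ^ 2)
        = fun x => (g x ^ 2 + (-(2 * c)) * g x) + c ^ 2 := by
      funext x; ring
    have hi3 : IntegrableOn (fun x => g x ^ 2) Q.pts ω := hIsq' Q.pts (pts_meas Q) hfin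
    have hi4 : IntegrableOn (fun x => -(2 * c) * g x) Q.pts ω := hgint.const_mul _
    have hi1 : IntegrableOn (fun x => g x ^ 2 + -(2 * c) * g x) Q.pts ω := hi3.add hi4
    have hi2 : IntegrableOn (fun _ => c ^ 2) Q.pts ω :=
      integrableOn_const hfin
    rw [hfun, integral_add hi1 hi2, integral_add hi3 hi4, integral_const_mul, hgK0,
      setIntegral_const, measureReal_def, smul_eq_mul, mul_comm]
    ring
  have hD_eq : ∫ x in Q.pts, (g x - c) ^ 2 ∂ω = ∫ x in Q.pts \ {p}, (g x - c) ^ 2 ∂ω := by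
    by_cases hpK : p ∈ Q.pts
    · have hsingle : ∫ x in ({p} : Set (EuclideanSpace ℝ (Fin n))), (g x - c) ^ 2 ∂ω = 0 := by
        by_cases hp0 : ω {p} = 0
        · rw [Measure.restrict_eq_zero.2 hp0, integral_zero_measure]
        · have heq : Set.EqOn (fun x => (g x - c) ^ 2) (fun _ => (0:ℝ)) {p} := by
            intro x hx
            rw [Set.mem_singleton_iff] at hx
            subst hx
            rw [hc, if_neg hp0]
            simp
          rw [setIntegral_congr_fun (measurableSet_singleton p) heq]
          simp
      have hunion : Q.pts = (Q.pts \ {p}) ∪ {p} :=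
        (Set.diff_union_of_subset (Set.singleton_subset_iff.2 hpK)).symm
      rw [hunion, setIntegral_union (Set.disjoint_sdiff_left) (measurableSet_singleton p)
        (hIsq c _ hDm hDfin)
        (hIsq c _ (measurableSet_singleton p)
          (ne_top_of_le_ne_top hfin (measure_mono (Set.singleton_subset_iff.2 hpK)))),
        hsingle, add_zero]
      congr 1
      rw [← hunion]
    · rw [Set.diff_singleton_eq_self hpK]
  have hfinal : ∫ x in Q.pts \ {p}, (g x - c) ^ 2 ∂ω
      ≤ Q.l ^ 2 * (ω (Q.pts \ {p})).toReal := by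
    have hb : ∀ᵐ x ∂(ω.restrict (Q.pts \ {p})), (g x - c) ^ 2 ≤ Q.l ^ 2 := by
      rw [ae_restrict_iff' hDm]
      filter_upwards [hbound] with x hx hxD
      exact hx hxD.1
    calc ∫ x in Q.pts \ {p}, (g x - c) ^ 2 ∂ω
        ≤ ∫ _x in Q.pts \ {p}, Q.l ^ 2 ∂ω :=
          integral_mono_ae (hIsq c _ hDm hDfin)
            (integrableOn_const hDfin) hb
      _ = Q.l ^ 2 * (ω (Q.pts \ {p})).toReal := by
          rw [setIntegral_const, measureReal_def, smul_eq_mul, mul_comm]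
  have hle : ∫ x, g x ^ 2 ∂ω ≤ Q.l ^ 2 * (ω (Q.pts \ {p})).toReal := by
    have h1 : ∫ x, g x ^ 2 ∂ω = ∫ x in Q.pts, g x ^ 2 ∂ω := by
      conv_lhs => rw [show (fun x => g x ^ 2) = Set.indicator Q.pts (fun x => g x ^ 2)
        from funext hgsq_eq]
      rw [integral_indicator (pts_meas Q)]
    have h2 : 0 ≤ c ^ 2 * (ω Q.pts).toReal :=
      mul_nonneg (sq_nonneg c) ENNReal.toReal_nonneg
    rw [h1]
    calc ∫ x in Q.pts, g x ^ 2 ∂ω ≤ ∫ x in Q.pts, (g x - c) ^ 2 ∂ω := by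
          rw [hexp]; linarith
      _ = ∫ x in Q.pts \ {p}, (g x - c) ^ 2 ∂ω := hD_eq
      _ ≤ Q.l ^ 2 * (ω (Q.pts \ {p})).toReal := hfinal
  calc ENNReal.ofReal (∫ x, g x ^ 2 ∂ω)
      ≤ ENNReal.ofReal (Q.l ^ 2 * (ω (Q.pts \ {p})).toReal) := ENNReal.ofReal_le_ofReal hle
    _ = ENNReal.ofReal (Q.l ^ 2) * ω (Q.pts \ {p}) := by
        rw [ENNReal.ofReal_mul (sq_nonneg _), ENNReal.ofReal_toReal hDfin]

end st18

/-- **'Prepare to puncture' estimate.** For a dyadic cube `K`, any `p ∈ ℝⁿ`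
and `ω̃ = ω − ω({p}) δ_p` (so `ω̃(K) = ω(K ∖ {p})`):
`‖Δ_K^ω x‖²_{L²(ω)} ≤ n ℓ(K)² ω̃(K)`; consequently, for any at most countable `𝔓 ⊆ ℝⁿ`
whose atoms in `K` have `ω`-masses attaining their supremum,
`‖Δ_K^ω x‖²_{L²(ω)} ≤ n ℓ(K)² ω(K, 𝔓)` where `ω(K,𝔓) = ω(K) − sup{ω({q}) : q ∈ K ∩ 𝔓}`. -/
theorem statement18 (n : ℕ) (t : Fin n → ℝ)
    (ω : Measure (EuclideanSpace ℝ (Fin n))) (hω : IsLocallyFiniteMeasure ω)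
    (K : QCube n) (hK : K ∈ dyadicGrid t) :
    (∀ p : EuclideanSpace ℝ (Fin n),
      energyTerm ω K ≤ (n : ℝ≥0∞) * ENNReal.ofReal (K.l ^ 2) * ω (K.pts \ {p})) ∧
    (∀ P : Set (EuclideanSpace ℝ (Fin n)), P.Countable →
      ((K.pts ∩ P).Nonempty → ∃ q ∈ K.pts ∩ P, ∀ q' ∈ K.pts ∩ P, ω {q'} ≤ ω {q}) →
      energyTerm ω K
        ≤ (n : ℝ≥0∞) * ENNReal.ofReal (K.l ^ 2) * (ω K.pts - ⨆ q ∈ K.pts ∩ P, ω {q})) := by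
  haveI := hω
  obtain ⟨k, m, hKe⟩ := hK
  have hl : 0 < K.l := by rw [hKe]; exact zpow_pos (by norm_num) _
  have hfin : ω K.pts ≠ ⊤ := (st18.pts_bounded K).measure_lt_top.ne
  have part1 : ∀ p : EuclideanSpace ℝ (Fin n),
      energyTerm ω K ≤ (n : ℝ≥0∞) * ENNReal.ofReal (K.l ^ 2) * ω (K.pts \ {p}) := by
    intro p
    calc energyTerm ω K
        ≤ ∑ _i : Fin n, ENNReal.ofReal (K.l ^ 2) * ω (K.pts \ {p}) :=
          Finset.sum_le_sum fun i _ => st18.key hl hfin p i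
      _ = (n : ℝ≥0∞) * ENNReal.ofReal (K.l ^ 2) * ω (K.pts \ {p}) := by
          rw [Finset.sum_const, Finset.card_univ, Fintype.card_fin, nsmul_eq_mul, mul_assoc]
  refine ⟨part1, ?_⟩
  intro P _hPc hSup
  by_cases hne : (K.pts ∩ P).Nonempty
  · obtain ⟨q, hq, hmax⟩ := hSup hne
    have hsup_eq : (⨆ q' ∈ K.pts ∩ P, ω {q'}) = ω {q} :=
      le_antisymm (iSup₂_le hmax) (le_iSup₂_of_le q hq le_rfl)
    have hsplit : ω (K.pts \ {q}) + ω {q} = ω K.pts := by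
      rw [← measure_union (Set.disjoint_sdiff_left) (measurableSet_singleton q),
        Set.diff_union_of_subset (Set.singleton_subset_iff.2 hq.1)]
    have hle2 : ω (K.pts \ {q}) ≤ ω K.pts - ⨆ q' ∈ K.pts ∩ P, ω {q'} := by
      rw [hsup_eq]
      have hqfin : ω {q} ≠ ⊤ :=
        ne_top_of_le_ne_top hfin (measure_mono (Set.singleton_subset_iff.2 hq.1))
      exact ENNReal.le_sub_of_add_le_left hqfin (by rw [add_comm]; exact hsplit.le)
    exact (part1 q).trans (mul_le_mul_right hle2 _)
  · have hz : (⨆ q ∈ K.pts ∩ P, ω {q}) = 0 := by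
      rw [Set.not_nonempty_iff_eq_empty] at hne
      simp [hne]
    rw [hz, tsub_zero]
    refine (part1 0).trans (mul_le_mul_right (measure_mono Set.diff_subset) _)
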